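/- Let J be a finite index set, r ∉ J, a : J → ℝ with a_j ≥ 0 for all j ∈ J, b ∈ ℝ, and P ⊆ J. Let P_W := {j ∈ P : a_j ∉ ℤ} and P_Z := P ∖ P_W. Set b̃ := b − Σ_{j∈P} a_j and assume 0 < b̃ < 1. With f(t) := t − ⌊t⌋, define ψ_w(t) := ⌊t⌋ + min(1, f(t)/f(b − Σ_{j∈P_W} a_j)). Then every x ∈ ℝ^{J ∪ {r}} with x_j = 0 for all j ∈ J∖P and 0 ≤ x_j ≤ 1 for all j ∈ P_Z that satisfies the wMIR constraint x_r + Σ_{j∈P_Z} a_j·x_j + Σ_{j∈J∖P} ψ_w(a_j)·x_j ≥ ⌈b − Σ_{j∈P_W} a_j⌉ has x_r ≥ 1. -/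
import Mathlib


/-- The wMIR reduced reason constraint propagates `x_r` tightly: under the local
bounds fixing `J∖P` to 0 and letting `P_Z` range in `[0,1]`, it forces `x_r ≥ 1`. -/
theorem wMIR_propagates_tightly
    {ι : Type*} [DecidableEq ι] (J : Finset ι) (r : ι) (hr : r ∉ J)
    (a : ι → ℝ) (ha : ∀ j ∈ J, 0 ≤ a j) (b : ℝ)
    (P : Finset ι) (hP : P ⊆ J)
    (PW PZ : Finset ι)
    (hPWsub : PW ⊆ P)
    (hPWspec : ∀ j ∈ P, (j ∈ PW ↔ ¬ ∃ z : ℤ, a j = (z : ℝ)))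
    (hPZ : PZ = P \ PW)
    (btil : ℝ) (hbt : btil = b - ∑ j ∈ P, a j)
    (h0 : 0 < btil) (h1 : btil < 1)
    (ψw : ℝ → ℝ)
    (hψw : ∀ t, ψw t = (⌊t⌋ : ℝ)
      + min 1 (Int.fract t / Int.fract (b - ∑ j ∈ PW, a j)))
    (x : ι → ℝ)
    (hx0 : ∀ j ∈ J \ P, x j = 0)
    (hxZ : ∀ j ∈ PZ, 0 ≤ x j ∧ x j ≤ 1)
    (hwmir : x r + ∑ j ∈ PZ, a j * x j + ∑ j ∈ J \ P, ψw (a j) * x j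
      ≥ (⌈b - ∑ j ∈ PW, a j⌉ : ℝ)) :
    x r ≥ 1 := by
  have hzero : ∑ j ∈ J \ P, ψw (a j) * x j = 0 :=
    Finset.sum_eq_zero fun j hj => by rw [hx0 j hj, mul_zero]
  have hPZP : ∀ j ∈ PZ, j ∈ P := fun j hj => by
    rw [hPZ] at hj; exact (Finset.mem_sdiff.mp hj).1
  have hint : ∀ j ∈ PZ, a j = (⌊a j⌋ : ℝ) := by
    intro j hj
    have hjP := hPZP j hj
    have hjnW : j ∉ PW := by rw [hPZ] at hj; exact (Finset.mem_sdiff.mp hj).2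
    have := (hPWspec j hjP).not
    rcases not_not.mp (this.mp hjnW) with ⟨z, hz⟩
    rw [hz]; norm_num
  obtain ⟨N, hN⟩ : ∃ N : ℤ, ∑ j ∈ PZ, a j = (N : ℝ) := by
    refine ⟨∑ j ∈ PZ, ⌊a j⌋, ?_⟩
    push_cast
    exact Finset.sum_congr rfl hint
  have hsplit : ∑ j ∈ P, a j = ∑ j ∈ PW, a j + ∑ j ∈ PZ, a j := by
    rw [hPZ, add_comm, Finset.sum_sdiff hPWsub]
  have hbw : b - ∑ j ∈ PW, a j = btil + (N : ℝ) := by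
    rw [hbt, hsplit, hN]; ring
  have hceil : (⌈b - ∑ j ∈ PW, a j⌉ : ℝ) = (N : ℝ) + 1 := by
    rw [hbw]
    have : ⌈btil + (N : ℝ)⌉ = ⌈btil⌉ + N := by
      rw [Int.ceil_add_intCast]
    rw [this]
    have : ⌈btil⌉ = 1 := by
      rw [Int.ceil_eq_iff]
      constructor <;> push_cast <;> linarith
    rw [this]; push_cast; ring
  have hbound : ∑ j ∈ PZ, a j * x j ≤ (N : ℝ) := by
    rw [← hN]
    apply Finset.sum_le_sum
    intro j hj
    have haj := ha j (hP (hPZP j hj))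
    have hx := hxZ j hj
    nlinarith [hx.1, hx.2]
  rw [hzero] at hwmir
  rw [hceil] at hwmir
  linarith
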